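/- Let ν be a norm on ℝ². For every real number α: α is ν-Dirichlet improvable if and only if there exist t₀ > 0 and an open set U ⊆ X containing the critical locus L_ν such that g_tΛ_α ∉ U for all t > t₀. -/

import Mathlib

open Matrix
noncomputable section

/-- `SL₂(ℝ)`. -/
abbrev SL2R := Matrix.SpecialLinearGroup (Fin 2) ℝ

/-- `SL₂(ℝ)` carries the topology induced from the space of matrices. -/
instance : TopologicalSpace SL2R :=
  TopologicalSpace.induced (fun g : SL2R => (g : Matrix (Fin 2) (Fin 2) ℝ)) inferInstance

/-- The subgroup `SL₂(ℤ)` of `SL₂(ℝ)`. -/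
def Gamma : Subgroup SL2R :=
  (Matrix.SpecialLinearGroup.map (n := Fin 2) (Int.castRingHom ℝ)).range

/-- `X = SL₂(ℝ)/SL₂(ℤ)`, the space of unimodular lattices in `ℝ²`,
with the quotient topology. -/
abbrev XSpace := SL2R ⧸ Gamma

/-- The diagonal matrix `g_t = [[eᵗ, 0], [0, e⁻ᵗ]]`. -/
def gDiag (t : ℝ) : SL2R :=
  ⟨!![Real.exp t, 0; 0, Real.exp (-t)], by
    simp [Matrix.det_fin_two_of, ← Real.exp_add]⟩

/-- The upper unipotent matrix `u_x = [[1, x], [0, 1]]`. -/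
def uMat (x : ℝ) : SL2R :=
  ⟨!![1, x; 0, 1], by simp [Matrix.det_fin_two_of]⟩

/-- The lower unipotent matrix `v_y = [[1, 0], [y, 1]]`. -/
def vMat (y : ℝ) : SL2R :=
  ⟨!![1, 0; y, 1], by simp [Matrix.det_fin_two_of]⟩

/-- The lattice `Λ_α = u_α ℤ²` as a point of `X`. -/
def LatX (α : ℝ) : XSpace := QuotientGroup.mk (uMat α)

/-- The full diagonal orbit `g_ℝ x = {g_t x : t ∈ ℝ}`. -/
def fullOrbit (x : XSpace) : Set XSpace := {y | ∃ t : ℝ, y = gDiag t • x}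

/-- The forward diagonal orbit `g_{ℝ>0} x = {g_t x : t > 0}`. -/
def fwdOrbit (x : XSpace) : Set XSpace := {y | ∃ t : ℝ, 0 < t ∧ y = gDiag t • x}

/-- The backward diagonal orbit `g_{ℝ<0} x = {g_t x : t < 0}`. -/
def bwdOrbit (x : XSpace) : Set XSpace := {y | ∃ t : ℝ, t < 0 ∧ y = gDiag t • x}

/-- `ν` is a norm on `ℝ²`. -/
def IsNorm (ν : (Fin 2 → ℝ) → ℝ) : Prop :=
  (∀ v, ν v = 0 ↔ v = 0) ∧ (∀ (a : ℝ) (v), ν (a • v) = |a| * ν v) ∧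
    (∀ v w, ν (v + w) ≤ ν v + ν w)

/-- The set of points of the unimodular lattice `g ℤ²` in `ℝ²`. -/
def latticePts (g : SL2R) : Set (Fin 2 → ℝ) :=
  {v | ∃ m : Fin 2 → ℤ, v = (g : Matrix (Fin 2) (Fin 2) ℝ).mulVec (fun i => (m i : ℝ))}

/-- The critical radius `r_ν`: the supremum of `r > 0` for which some unimodular
lattice meets the open ball `B_ν(r)` only at the origin. -/
def criticalRadius (ν : (Fin 2 → ℝ) → ℝ) : ℝ :=
  sSup {r : ℝ | 0 < r ∧ ∃ g : SL2R, ∀ v ∈ latticePts g, ν v < r → v = 0}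

/-- `α` is `ν`-Dirichlet improvable: there are `c ∈ (0,1)` and `T₀ > 1` such that for
every `T ≥ T₀` the lattice `Λ_α` meets `diag(cT⁻¹, T) B_ν(r_ν)` nontrivially, i.e. there
is a nonzero `(p,q) ∈ ℤ²` with `ν(c⁻¹T(p + αq), T⁻¹q) < r_ν`. -/
def DirichletImprovable (ν : (Fin 2 → ℝ) → ℝ) (α : ℝ) : Prop :=
  ∃ c : ℝ, 0 < c ∧ c < 1 ∧ ∃ T₀ : ℝ, 1 < T₀ ∧ ∀ T : ℝ, T₀ ≤ T →
    ∃ p q : ℤ, ¬(p = 0 ∧ q = 0) ∧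
      ν ![c⁻¹ * T * ((p : ℝ) + α * (q : ℝ)), T⁻¹ * (q : ℝ)] < criticalRadius ν

/-- The critical locus `L_ν ⊆ X`: the set of unimodular lattices meeting the open ball
`B_ν(r_ν)` only at the origin. -/
def criticalLocus (ν : (Fin 2 → ℝ) → ℝ) : Set XSpace :=
  {x | ∃ g : SL2R, QuotientGroup.mk g = x ∧
    ∀ v ∈ latticePts g, ν v < criticalRadius ν → v = 0}

open Filter Topology

namespace Stmt8Aux

abbrev Mi := Matrix (Fin 2) (Fin 2) ℝ

/-- cast an integer vector to a real vector -/
def Mcast (m : Fin 2 → ℤ) : Fin 2 → ℝ := fun i => (m i : ℝ)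

/-- the lattice point of `gℤ²` corresponding to the integer vector `m` -/
def lvec (g : SL2R) (m : Fin 2 → ℤ) : Fin 2 → ℝ := (g : Mi).mulVec (Mcast m)

/-- the embedding of `SL₂(ℤ)` into `SL₂(ℝ)` -/
def castMat (γ : Matrix.SpecialLinearGroup (Fin 2) ℤ) : SL2R :=
  Matrix.SpecialLinearGroup.map (Int.castRingHom ℝ) γ

lemma castMat_mem_Gamma (γ : Matrix.SpecialLinearGroup (Fin 2) ℤ) : castMat γ ∈ Gamma :=
  ⟨γ, rfl⟩

lemma Mcast_zero : Mcast 0 = 0 := by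
  funext i; simp [Mcast]

lemma Mcast_eq_zero {m : Fin 2 → ℤ} (h : Mcast m = 0) : m = 0 := by
  funext i
  have := congrFun h i
  simpa [Mcast] using this

lemma lvec_apply (g : SL2R) (m : Fin 2 → ℤ) (i : Fin 2) :
    lvec g m i = (g : Mi) i 0 * (m 0 : ℝ) + (g : Mi) i 1 * (m 1 : ℝ) := by
  simp [lvec, Matrix.mulVec, dotProduct, Fin.sum_univ_two, Mcast]

lemma lvec_zero (g : SL2R) : lvec g 0 = 0 := by
  simp [lvec, Mcast_zero]

lemma castMat_mulVec (γ : Matrix.SpecialLinearGroup (Fin 2) ℤ) (m : Fin 2 → ℤ) :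
    ((castMat γ : SL2R) : Mi).mulVec (Mcast m) = Mcast (γ.val.mulVec m) := by
  funext i
  simp only [castMat, Matrix.SpecialLinearGroup.map_apply_coe, Matrix.mulVec,
    dotProduct, Fin.sum_univ_two, Mcast, RingHom.mapMatrix_apply, Matrix.map_apply, Int.coe_castRingHom]
  push_cast
  ring

lemma lvec_mul_castMat (g : SL2R) (γ : Matrix.SpecialLinearGroup (Fin 2) ℤ) (m : Fin 2 → ℤ) :
    lvec (g * castMat γ) m = lvec g (γ.val.mulVec m) := by
  unfold lvec
  rw [Matrix.SpecialLinearGroup.coe_mul, ← Matrix.mulVec_mulVec, castMat_mulVec]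

lemma lvec_cancel (g : SL2R) (m : Fin 2 → ℤ) :
    ((g⁻¹ : SL2R) : Mi).mulVec (lvec g m) = Mcast m := by
  unfold lvec
  rw [Matrix.mulVec_mulVec]
  have h1 : ((g⁻¹ : SL2R) : Mi) * (g : Mi) = (1 : Mi) := by
    rw [← Matrix.SpecialLinearGroup.coe_mul, inv_mul_cancel,
      Matrix.SpecialLinearGroup.coe_one]
  rw [h1, Matrix.one_mulVec]

lemma lvec_ne_zero (g : SL2R) {m : Fin 2 → ℤ} (hm : m ≠ 0) : lvec g m ≠ 0 := by
  intro h
  apply hm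
  apply Mcast_eq_zero
  rw [← lvec_cancel g m, h, Matrix.mulVec_zero]

lemma int_mulVec_ne_zero (γ : Matrix.SpecialLinearGroup (Fin 2) ℤ) {m : Fin 2 → ℤ}
    (hm : m ≠ 0) : γ.val.mulVec m ≠ 0 := by
  intro h
  apply hm
  have h3 : γ⁻¹.val.mulVec (γ.val.mulVec m) = m := by
    rw [Matrix.mulVec_mulVec, ← Matrix.SpecialLinearGroup.coe_mul, inv_mul_cancel,
      Matrix.SpecialLinearGroup.coe_one, Matrix.one_mulVec]
  rw [← h3, h, Matrix.mulVec_zero]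

/-! ### Norm facts -/

lemma nu_zero {ν : (Fin 2 → ℝ) → ℝ} (hν : IsNorm ν) : ν 0 = 0 := (hν.1 0).mpr rfl

lemma nu_neg {ν : (Fin 2 → ℝ) → ℝ} (hν : IsNorm ν) (v : Fin 2 → ℝ) : ν (-v) = ν v := by
  have := hν.2.1 (-1) v
  simpa using this

lemma nu_nonneg {ν : (Fin 2 → ℝ) → ℝ} (hν : IsNorm ν) (v : Fin 2 → ℝ) : 0 ≤ ν v := by
  have h1 := hν.2.2 v (-v)
  rw [add_neg_cancel, nu_zero hν, nu_neg hν] at h1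
  linarith

lemma nu_pos {ν : (Fin 2 → ℝ) → ℝ} (hν : IsNorm ν) {v : Fin 2 → ℝ} (hv : v ≠ 0) : 0 < ν v := by
  rcases lt_or_eq_of_le (nu_nonneg hν v) with h | h
  · exact h
  · exact absurd ((hν.1 v).mp h.symm) hv

lemma nu_sub_le {ν : (Fin 2 → ℝ) → ℝ} (hν : IsNorm ν) (x y : Fin 2 → ℝ) :
    ν x ≤ ν y + ν (x - y) := by
  have := hν.2.2 y (x - y)
  simpa using this

lemma abs_le_pinorm (v : Fin 2 → ℝ) (i : Fin 2) : |v i| ≤ ‖v‖ := by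
  have := norm_le_pi_norm v i
  simpa [Real.norm_eq_abs] using this

lemma pinorm_le (v : Fin 2 → ℝ) {R : ℝ} (hR : 0 ≤ R) (h : ∀ i, |v i| ≤ R) : ‖v‖ ≤ R := by
  rw [pi_norm_le_iff_of_nonneg hR]
  intro i
  simpa [Real.norm_eq_abs] using h i

lemma nu_upper {ν : (Fin 2 → ℝ) → ℝ} (hν : IsNorm ν) :
    ∃ C : ℝ, 0 < C ∧ ∀ v, ν v ≤ C * ‖v‖ := by
  refine ⟨ν ![1, 0] + ν ![0, 1] + 1, ?_, ?_⟩
  · have h0 := nu_nonneg hν ![1, 0]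
    have h1 := nu_nonneg hν ![0, 1]
    linarith
  · intro v
    have hv : v = v 0 • ![1, 0] + v 1 • ![0, 1] := by
      funext i
      fin_cases i <;> simp
    calc ν v = ν (v 0 • ![1, 0] + v 1 • ![0, 1]) := by rw [← hv]
    _ ≤ ν (v 0 • ![1, 0]) + ν (v 1 • ![0, 1]) := hν.2.2 _ _
    _ = |v 0| * ν ![1, 0] + |v 1| * ν ![0, 1] := by rw [hν.2.1, hν.2.1]
    _ ≤ ‖v‖ * ν ![1, 0] + ‖v‖ * ν ![0, 1] := by
        have := abs_le_pinorm v 0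
        have := abs_le_pinorm v 1
        have := nu_nonneg hν ![1, 0]
        have := nu_nonneg hν ![0, 1]
        nlinarith
    _ ≤ (ν ![1, 0] + ν ![0, 1] + 1) * ‖v‖ := by
        have : (0:ℝ) ≤ ‖v‖ := norm_nonneg v
        nlinarith

lemma nu_continuous {ν : (Fin 2 → ℝ) → ℝ} (hν : IsNorm ν) : Continuous ν := by
  obtain ⟨C, hC, hCle⟩ := nu_upper hν
  rw [Metric.continuous_iff]
  intro b ε hε
  refine ⟨ε / C, by positivity, fun a ha => ?_⟩
  have h1 : ν a ≤ ν b + ν (a - b) := nu_sub_le hν a b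
  have h2 : ν b ≤ ν a + ν (b - a) := nu_sub_le hν b a
  have h3 : ν (a - b) ≤ C * ‖a - b‖ := hCle _
  have h4 : ν (b - a) ≤ C * ‖b - a‖ := hCle _
  have h5 : ‖a - b‖ = dist a b := (dist_eq_norm a b).symm
  have h6 : ‖b - a‖ = dist a b := by rw [dist_comm]; exact (dist_eq_norm b a).symm
  rw [Real.dist_eq]
  rw [abs_lt]
  have : C * dist a b < ε := by
    calc C * dist a b < C * (ε / C) := by
          apply mul_lt_mul_of_pos_left ha hC
    _ = ε := by field_simp
  constructor <;> nlinarith [dist_nonneg (x := a) (y := b)]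

lemma nu_lower {ν : (Fin 2 → ℝ) → ℝ} (hν : IsNorm ν) :
    ∃ c : ℝ, 0 < c ∧ ∀ v, c * ‖v‖ ≤ ν v := by
  have hS : IsCompact (Metric.sphere (0 : Fin 2 → ℝ) 1) := isCompact_sphere 0 1
  have hne : (Metric.sphere (0 : Fin 2 → ℝ) 1).Nonempty := by
    refine ⟨![1, 0], ?_⟩
    rw [mem_sphere_zero_iff_norm]
    apply le_antisymm
    · apply pinorm_le _ zero_le_one
      intro i; fin_cases i <;> norm_num
    · have := abs_le_pinorm ![1, 0] 0
      simpa using this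
  obtain ⟨w, hw, hwmin⟩ := hS.exists_isMinOn hne ((nu_continuous hν).continuousOn)
  have hw1 : ‖w‖ = 1 := mem_sphere_zero_iff_norm.mp hw
  have hwne : w ≠ 0 := by
    intro h; rw [h] at hw1; simp at hw1
  refine ⟨ν w, nu_pos hν hwne, fun v => ?_⟩
  rcases eq_or_ne v 0 with rfl | hv
  · simp [nu_zero hν]
  · have hnv : (0:ℝ) < ‖v‖ := norm_pos_iff.mpr hv
    have hu : ‖v‖⁻¹ • v ∈ Metric.sphere (0 : Fin 2 → ℝ) 1 := by
      rw [mem_sphere_zero_iff_norm, norm_smul]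
      simp [abs_of_pos (inv_pos.mpr hnv), inv_mul_cancel₀ (ne_of_gt hnv)]
    have hmin : ν w ≤ ν (‖v‖⁻¹ • v) := hwmin hu
    have hsm : ‖v‖ • (‖v‖⁻¹ • v) = v := smul_inv_smul₀ (ne_of_gt hnv) v
    have hkey : ν v = ‖v‖ * ν (‖v‖⁻¹ • v) := by
      conv_lhs => rw [← hsm]
      rw [hν.2.1, abs_of_pos hnv]
    rw [hkey]
    have := nu_nonneg hν (‖v‖⁻¹ • v)
    nlinarith

end Stmt8Aux

namespace Stmt8Aux

/-! ### Euclidean square, finiteness -/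

def eSq (v : Fin 2 → ℝ) : ℝ := v 0 ^ 2 + v 1 ^ 2

lemma fin2_cases (i : Fin 2) : i = 0 ∨ i = 1 := by omega

lemma eSq_nonneg (v : Fin 2 → ℝ) : 0 ≤ eSq v := by unfold eSq; positivity

lemma eSq_pos {v : Fin 2 → ℝ} (hv : v ≠ 0) : 0 < eSq v := by
  rcases (eSq_nonneg v).lt_or_eq with h | h
  · exact h
  · exfalso
    apply hv
    funext i
    have h0 : v 0 ^ 2 + v 1 ^ 2 = 0 := h.symm
    have h1 : v 0 = 0 ∧ v 1 = 0 := by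
      constructor <;> nlinarith [sq_nonneg (v 0), sq_nonneg (v 1)]
    fin_cases i
    · exact h1.1
    · exact h1.2

lemma pinorm_le_sqrt_eSq (v : Fin 2 → ℝ) : ‖v‖ ≤ Real.sqrt (eSq v) := by
  apply pinorm_le _ (Real.sqrt_nonneg _)
  intro i
  rw [← Real.sqrt_sq_eq_abs]
  apply Real.sqrt_le_sqrt
  rcases fin2_cases i with rfl | rfl <;> unfold eSq <;>
    nlinarith [sq_nonneg (v 0), sq_nonneg (v 1)]

lemma sq_pinorm_le_eSq (v : Fin 2 → ℝ) : ‖v‖ ^ 2 ≤ eSq v := by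
  have h := pinorm_le_sqrt_eSq v
  have h2 : ‖v‖ ^ 2 ≤ Real.sqrt (eSq v) ^ 2 := by
    apply pow_le_pow_left₀ (norm_nonneg v) h 2
  rwa [Real.sq_sqrt (eSq_nonneg v)] at h2

lemma mulVec_entry_bound (A : Mi) (v : Fin 2 → ℝ) (i : Fin 2) :
    |(A.mulVec v) i| ≤ (|A i 0| + |A i 1|) * ‖v‖ := by
  have h : (A.mulVec v) i = A i 0 * v 0 + A i 1 * v 1 := by
    simp [Matrix.mulVec, dotProduct, Fin.sum_univ_two]
  rw [h]
  calc |A i 0 * v 0 + A i 1 * v 1| ≤ |A i 0 * v 0| + |A i 1 * v 1| := abs_add_le _ _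
  _ = |A i 0| * |v 0| + |A i 1| * |v 1| := by rw [abs_mul, abs_mul]
  _ ≤ |A i 0| * ‖v‖ + |A i 1| * ‖v‖ := by
      have h0 := abs_le_pinorm v 0
      have h1 := abs_le_pinorm v 1
      have := abs_nonneg (A i 0)
      have := abs_nonneg (A i 1)
      nlinarith
  _ = (|A i 0| + |A i 1|) * ‖v‖ := by ring

lemma finite_box (R : ℝ) : {m : Fin 2 → ℤ | ‖Mcast m‖ ≤ R}.Finite := by
  have hsub : {m : Fin 2 → ℤ | ‖Mcast m‖ ≤ R} ⊆
      Set.pi Set.univ (fun _ : Fin 2 => Set.Icc (-⌈R⌉) ⌈R⌉) := by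
    intro m hm
    rw [Set.mem_pi]
    intro i _
    have h1 : |(m i : ℝ)| ≤ R := by
      have := abs_le_pinorm (Mcast m) i
      exact le_trans this hm
    have h2 : ((-⌈R⌉ : ℤ) : ℝ) ≤ (m i : ℝ) ∧ ((m i : ℝ)) ≤ ((⌈R⌉ : ℤ) : ℝ) := by
      rw [abs_le] at h1
      constructor
      · push_cast
        have := Int.le_ceil R
        linarith [h1.1]
      · have := Int.le_ceil R
        linarith [h1.2]
    constructor
    · exact_mod_cast h2.1
    · exact_mod_cast h2.2
  exact Set.Finite.subset (Set.Finite.pi (fun _ => Set.finite_Icc _ _)) hsub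

/-- row-sum bound for the inverse: `‖m‖ ≤ K * ‖g m‖`. -/
lemma inv_bound (g : SL2R) : ∃ K : ℝ, 0 < K ∧
    ∀ m : Fin 2 → ℤ, ‖Mcast m‖ ≤ K * ‖lvec g m‖ := by
  set A : Mi := ((g⁻¹ : SL2R) : Mi) with hA
  refine ⟨|A 0 0| + |A 0 1| + |A 1 0| + |A 1 1| + 1, by positivity, fun m => ?_⟩
  have hcancel : A.mulVec (lvec g m) = Mcast m := lvec_cancel g m
  rw [← hcancel]
  apply pinorm_le
  · positivity
  · intro i
    calc |(A.mulVec (lvec g m)) i| ≤ (|A i 0| + |A i 1|) * ‖lvec g m‖ :=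
        mulVec_entry_bound A _ i
    _ ≤ (|A 0 0| + |A 0 1| + |A 1 0| + |A 1 1| + 1) * ‖lvec g m‖ := by
        have := norm_nonneg (lvec g m)
        rcases fin2_cases i with rfl | rfl
        · nlinarith [abs_nonneg (A 1 0), abs_nonneg (A 1 1)]
        · nlinarith [abs_nonneg (A 0 0), abs_nonneg (A 0 1)]
  
lemma finite_small (g : SL2R) (R : ℝ) : {m : Fin 2 → ℤ | ‖lvec g m‖ ≤ R}.Finite := by
  obtain ⟨K, hK, hKb⟩ := inv_bound g
  apply Set.Finite.subset (finite_box (K * R))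
  intro m hm
  simp only [Set.mem_setOf_eq] at hm ⊢
  calc ‖Mcast m‖ ≤ K * ‖lvec g m‖ := hKb m
  _ ≤ K * R := by nlinarith

/-! ### Topology -/

lemma coe_inducing : IsInducing (fun g : SL2R => (g : Mi)) := ⟨rfl⟩

lemma cont_entry (i j : Fin 2) : Continuous (fun g : SL2R => (g : Mi) i j) := by
  have h1 : Continuous (fun A : Mi => A i j) :=
    (continuous_apply j).comp (continuous_apply i)
  exact h1.comp coe_inducing.continuous

lemma mk_continuous : Continuous (QuotientGroup.mk : SL2R → XSpace) :=
  continuous_quotient_mk'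

lemma isOpen_mk_image {S : Set SL2R} (hS : IsOpen S)
    (hinv : ∀ g γ, g ∈ S → γ ∈ Gamma → g * γ ∈ S) :
    IsOpen (QuotientGroup.mk '' S : Set XSpace) := by
  have hpre : QuotientGroup.mk ⁻¹' (QuotientGroup.mk '' S : Set XSpace) = S := by
    ext g
    simp only [Set.mem_preimage, Set.mem_image]
    constructor
    · rintro ⟨s, hs, hsg⟩
      have hmem : s⁻¹ * g ∈ Gamma := QuotientGroup.eq.mp hsg
      have : g = s * (s⁻¹ * g) := by group
      rw [this]
      exact hinv s (s⁻¹ * g) hs hmem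
    · intro hg
      exact ⟨g, hg, rfl⟩
  have hq : IsQuotientMap (QuotientGroup.mk : SL2R → XSpace) := isQuotientMap_quotient_mk'
  rw [← hq.isOpen_preimage, hpre]
  exact hS

lemma mk_eq_iff {g h : SL2R} : (QuotientGroup.mk g : XSpace) = QuotientGroup.mk h ↔
    g⁻¹ * h ∈ Gamma := QuotientGroup.eq

lemma smul_LatX (t α : ℝ) : gDiag t • LatX α = QuotientGroup.mk (gDiag t * uMat α) := by
  rw [LatX, MulAction.Quotient.smul_mk]
  rfl

lemma cont_nu_lvec {ν : (Fin 2 → ℝ) → ℝ} (hν : IsNorm ν) (m : Fin 2 → ℤ) :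
    Continuous (fun g : SL2R => ν (lvec g m)) := by
  apply (nu_continuous hν).comp
  have : Continuous (fun g : SL2R => lvec g m) := by
    apply continuous_pi
    intro i
    have h : (fun g : SL2R => lvec g m i) =
        fun g : SL2R => (g : Mi) i 0 * (m 0 : ℝ) + (g : Mi) i 1 * (m 1 : ℝ) := by
      funext g; exact lvec_apply g m i
    rw [h]
    exact ((cont_entry i 0).mul continuous_const).add ((cont_entry i 1).mul continuous_const)
  exact this

end Stmt8Aux

namespace Stmt8Aux

/-- The set of lattices all of whose nonzero points have `ν`-value `> δ` is open. -/
lemma isOpen_S {ν : (Fin 2 → ℝ) → ℝ} (hν : IsNorm ν) (δ : ℝ) :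
    IsOpen {g : SL2R | ∀ m : Fin 2 → ℤ, m ≠ 0 → δ < ν (lvec g m)} := by
  rw [isOpen_iff_forall_mem_open]
  intro g₀ hg₀
  obtain ⟨C, hC, hCu⟩ := nu_upper hν
  obtain ⟨c₀, hc₀, hcl⟩ := nu_lower hν
  obtain ⟨K, hK, hKb⟩ := inv_bound g₀
  set c₁ := c₀ / K with hc₁def
  have hc₁ : 0 < c₁ := div_pos hc₀ hK
  have hlow : ∀ m : Fin 2 → ℤ, c₁ * ‖Mcast m‖ ≤ ν (lvec g₀ m) := by
    intro m
    have h1 := hKb m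
    have h2 := hcl (lvec g₀ m)
    have he : c₁ * K = c₀ := by
      rw [hc₁def]; field_simp
    nlinarith [norm_nonneg (lvec g₀ m)]
  set N₀ : ℝ := 2 * δ / c₁ + 1 with hN₀def
  set N₁ : ℝ := max N₀ 1 with hN₁def
  have hN₁pos : 0 < N₁ := lt_of_lt_of_le one_pos (le_max_right _ _)
  set M := {m : Fin 2 → ℤ | m ≠ 0 ∧ ‖Mcast m‖ ≤ N₁} with hMdef
  have hMfin : M.Finite := (finite_box N₁).subset (fun m hm => hm.2)
  have hηex : ∃ η : ℝ, 0 < η ∧ ∀ m ∈ M, δ + η ≤ ν (lvec g₀ m) := by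
    by_cases hne : M.Nonempty
    · obtain ⟨mmin, hmmin, hminle⟩ :=
        Set.exists_min_image M (fun m => ν (lvec g₀ m)) hMfin hne
      refine ⟨ν (lvec g₀ mmin) - δ, ?_, ?_⟩
      · have := hg₀ mmin hmmin.1
        linarith
      · intro m hm
        have := hminle m hm
        linarith
    · exact ⟨1, one_pos, fun m hm => absurd ⟨m, hm⟩ hne⟩
  obtain ⟨η, hη, hηM⟩ := hηex
  set ε := min (c₁ / (4 * C)) (η / (2 * C * N₁ + 1)) with hεdef
  have hε : 0 < ε := lt_min (by positivity) (by positivity)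
  refine ⟨{g : SL2R | ∀ i j, |(g : Mi) i j - (g₀ : Mi) i j| < ε}, ?_, ?_, ?_⟩
  · -- the ball is contained in S
    intro g hg
    simp only [Set.mem_setOf_eq] at hg ⊢
    intro m hm
    have hpert : ν (lvec g₀ m) ≤ ν (lvec g m) + 2 * C * ε * ‖Mcast m‖ := by
      have h1 := nu_sub_le hν (lvec g₀ m) (lvec g m)
      have h2 : lvec g₀ m - lvec g m = ((g₀ : Mi) - (g : Mi)).mulVec (Mcast m) := by
        unfold lvec
        rw [Matrix.sub_mulVec]
      have h3 : ν (lvec g₀ m - lvec g m) ≤ C * ‖((g₀ : Mi) - (g : Mi)).mulVec (Mcast m)‖ := by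
        rw [h2]
        exact hCu _
      have h4 : ‖((g₀ : Mi) - (g : Mi)).mulVec (Mcast m)‖ ≤ 2 * ε * ‖Mcast m‖ := by
        apply pinorm_le _ (by positivity)
        intro i
        have h5 := mulVec_entry_bound ((g₀ : Mi) - (g : Mi)) (Mcast m) i
        have h6 : |((g₀ : Mi) - (g : Mi)) i 0| ≤ ε := by
          have := hg i 0
          rw [Matrix.sub_apply]
          rw [abs_sub_comm] at this
          linarith
        have h7 : |((g₀ : Mi) - (g : Mi)) i 1| ≤ ε := by
          have := hg i 1
          rw [Matrix.sub_apply]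
          rw [abs_sub_comm] at this
          linarith
        have h8 := norm_nonneg (Mcast m)
        nlinarith
      nlinarith [norm_nonneg (Mcast m)]
    by_cases hcase : ‖Mcast m‖ ≤ N₁
    · have h5 := hηM m ⟨hm, hcase⟩
      have h7 : ε ≤ η / (2 * C * N₁ + 1) := min_le_right _ _
      have h8 : ε * (2 * C * N₁ + 1) ≤ η := (le_div_iff₀ (by positivity)).mp h7
      have h9 : 2 * C * ε * ‖Mcast m‖ ≤ 2 * C * ε * N₁ :=
        mul_le_mul_of_nonneg_left hcase (by positivity)
      nlinarith
    · push_neg at hcase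
      have h5 := hlow m
      have h7 : ε ≤ c₁ / (4 * C) := min_le_left _ _
      have h8 : ε * (4 * C) ≤ c₁ := (le_div_iff₀ (by positivity)).mp h7
      have h9 : c₁ * N₀ = 2 * δ + c₁ := by
        rw [hN₀def, mul_comm, add_mul, one_mul, div_mul_cancel₀ _ (ne_of_gt hc₁)]
      have hN₁N₀ : N₀ ≤ N₁ := le_max_left _ _
      have h10 : 2 * C * ε * ‖Mcast m‖ ≤ (c₁ / 2) * ‖Mcast m‖ := by
        nlinarith [norm_nonneg (Mcast m)]
      have h11 : (c₁ / 2) * N₁ ≤ (c₁ / 2) * ‖Mcast m‖ := by nlinarith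
      nlinarith
  · -- openness
    have heq : {g : SL2R | ∀ i j, |(g : Mi) i j - (g₀ : Mi) i j| < ε} =
        ⋂ i, ⋂ j, {g : SL2R | |(g : Mi) i j - (g₀ : Mi) i j| < ε} := by
      ext g
      simp [Set.mem_iInter]
    rw [heq]
    apply isOpen_iInter_of_finite
    intro i
    apply isOpen_iInter_of_finite
    intro j
    exact isOpen_lt ((cont_entry i j).sub continuous_const).abs continuous_const
  · -- membership
    simp [hε]

end Stmt8Aux

namespace Stmt8Aux

def mE0 : Fin 2 → ℤ := ![1, 0]
def mE1 : Fin 2 → ℤ := ![0, 1]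

lemma mE0_ne_zero : mE0 ≠ 0 := by
  intro h
  have := congrFun h 0
  simp [mE0] at this

def ip (v w : Fin 2 → ℝ) : ℝ := v 0 * w 0 + v 1 * w 1

lemma aux_pos {E a2 ipv : ℝ} (ha2 : 0 < a2) (hlag : E * a2 = ipv ^ 2 + 1) : 0 < E := by
  by_contra hc
  push_neg at hc
  nlinarith [sq_nonneg ipv]

lemma aux_a2le {E a2 ipv : ℝ} (ha2 : 0 < a2) (hlag : E * a2 = ipv ^ 2 + 1)
    (hip : |ipv| ≤ a2 / 2) (hge : a2 ≤ E) : a2 ≤ 2 := by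
  obtain ⟨hlo, hhi⟩ := abs_le.mp hip
  have h3 : ipv ^ 2 ≤ (a2 / 2) ^ 2 := sq_le_sq' hlo hhi
  have h4 : a2 * a2 ≤ E * a2 := mul_le_mul_of_nonneg_right hge ha2.le
  nlinarith [sq_nonneg (a2 - 2)]

lemma aux_Ele {E a2 ipv ε : ℝ} (hε : 0 < ε) (hεa : ε ≤ a2) (ha2 : 0 < a2) (h10 : a2 ≤ 2)
    (hlag : E * a2 = ipv ^ 2 + 1) (hip : |ipv| ≤ a2 / 2) : E ≤ 1 / 2 + 1 / ε := by
  obtain ⟨hlo, hhi⟩ := abs_le.mp hip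
  have h3 : ipv ^ 2 ≤ (a2 / 2) ^ 2 := sq_le_sq' hlo hhi
  have h7 : (a2 / 4 + 1 / a2) * a2 = a2 ^ 2 / 4 + 1 := by
    field_simp
  have h6 : E * a2 ≤ (a2 / 4 + 1 / a2) * a2 := by nlinarith
  have h8 : E ≤ a2 / 4 + 1 / a2 := le_of_mul_le_mul_right h6 ha2
  have h9 : 1 / a2 ≤ 1 / ε := one_div_le_one_div_of_le hε hεa
  linarith

lemma aux_abs1 {x a2 ε : ℝ} (hε : 0 < ε) (h1 : x ^ 2 ≤ a2) (h2 : a2 ≤ 2) :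
    |x| ≤ 2 + 1 / ε := by
  have h3 : 0 < 1 / ε := one_div_pos.mpr hε
  rw [abs_le]
  constructor <;> nlinarith [sq_nonneg (x - 2), sq_nonneg (x + 2)]

lemma aux_abs2 {x E ε : ℝ} (hε : 0 < ε) (h1 : x ^ 2 ≤ E) (h2 : E ≤ 1 / 2 + 1 / ε) :
    |x| ≤ 2 + 1 / ε := by
  have h3 : 0 < 1 / ε := one_div_pos.mpr hε
  rw [abs_le]
  constructor <;> nlinarith [sq_nonneg (x - 2), sq_nonneg (x + 2), sq_nonneg (1 / ε), sq_nonneg (x - 1 / ε), sq_nonneg (x + 1 / ε)]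

/-- Reduction theory: a unimodular lattice all of whose nonzero vectors have squared
Euclidean length `≥ ε` has a representative with entries bounded in terms of `ε`. -/
lemma reduction {ε : ℝ} (hε : 0 < ε) (g : SL2R)
    (hg : ∀ m : Fin 2 → ℤ, m ≠ 0 → ε ≤ eSq (lvec g m)) :
    ∃ γ : Matrix.SpecialLinearGroup (Fin 2) ℤ,
      ∀ i j, |((g * castMat γ : SL2R) : Mi) i j| ≤ 2 + 1 / ε := by
  -- find the shortest vector
  have hMfin : {m : Fin 2 → ℤ | m ≠ 0 ∧ eSq (lvec g m) ≤ eSq (lvec g mE0)}.Finite := by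
    apply (finite_small g (Real.sqrt (eSq (lvec g mE0)))).subset
    intro m hm
    simp only [Set.mem_setOf_eq]
    calc ‖lvec g m‖ ≤ Real.sqrt (eSq (lvec g m)) := pinorm_le_sqrt_eSq _
    _ ≤ Real.sqrt (eSq (lvec g mE0)) := Real.sqrt_le_sqrt hm.2
  obtain ⟨m₁, hm₁, hminM⟩ := Set.exists_min_image _ (fun m => eSq (lvec g m)) hMfin
    ⟨mE0, mE0_ne_zero, le_refl _⟩
  have hm₁0 : m₁ ≠ 0 := hm₁.1
  have hmin : ∀ m : Fin 2 → ℤ, m ≠ 0 → eSq (lvec g m₁) ≤ eSq (lvec g m) := by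
    intro m hm
    by_cases hmem : m ∈ {m : Fin 2 → ℤ | m ≠ 0 ∧ eSq (lvec g m) ≤ eSq (lvec g mE0)}
    · exact hminM m hmem
    · simp only [Set.mem_setOf_eq, not_and, not_le] at hmem
      have h1 := hmem hm
      have h2 := hminM mE0 ⟨mE0_ne_zero, le_refl _⟩
      linarith
  -- the shortest vector is primitive
  have hgcd : Int.gcd (m₁ 0) (m₁ 1) = 1 := by
    by_contra hne
    have hd0 : Int.gcd (m₁ 0) (m₁ 1) ≠ 0 := by
      intro h0
      rw [Int.gcd_eq_zero_iff] at h0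
      apply hm₁0
      funext i
      rcases fin2_cases i with rfl | rfl
      · exact h0.1
      · exact h0.2
    set d : ℤ := (Int.gcd (m₁ 0) (m₁ 1) : ℤ) with hd
    have hd2 : (2 : ℤ) ≤ d := by
      have h1 : 1 ≤ Int.gcd (m₁ 0) (m₁ 1) := Nat.one_le_iff_ne_zero.mpr hd0
      have h2 : Int.gcd (m₁ 0) (m₁ 1) ≠ 1 := hne
      omega
    set m' : Fin 2 → ℤ := ![m₁ 0 / d, m₁ 1 / d] with hm'
    have hdvd0 : d ∣ m₁ 0 := Int.gcd_dvd_left _ _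
    have hdvd1 : d ∣ m₁ 1 := Int.gcd_dvd_right _ _
    have hcast : Mcast m₁ = (d : ℝ) • Mcast m' := by
      funext i
      rcases fin2_cases i with rfl | rfl
      · simp only [Mcast, hm', Pi.smul_apply, smul_eq_mul]
        rw [show (![m₁ 0 / d, m₁ 1 / d] : Fin 2 → ℤ) 0 = m₁ 0 / d from rfl]
        rw [← Int.cast_mul, Int.mul_ediv_cancel' hdvd0]
      · simp only [Mcast, hm', Pi.smul_apply, smul_eq_mul]
        rw [show (![m₁ 0 / d, m₁ 1 / d] : Fin 2 → ℤ) 1 = m₁ 1 / d from rfl]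
        rw [← Int.cast_mul, Int.mul_ediv_cancel' hdvd1]
    have hm'0 : m' ≠ 0 := by
      intro h0
      apply hm₁0
      apply Mcast_eq_zero
      rw [hcast, h0, Mcast_zero, smul_zero]
    have hlv : lvec g m₁ = (d : ℝ) • lvec g m' := by
      unfold lvec
      rw [hcast, Matrix.mulVec_smul]
    have heSq : eSq (lvec g m₁) = (d : ℝ) ^ 2 * eSq (lvec g m') := by
      rw [hlv]
      simp only [eSq, Pi.smul_apply, smul_eq_mul]
      ring
    have hpos : 0 < eSq (lvec g m') := eSq_pos (lvec_ne_zero g hm'0)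
    have hle := hmin m' hm'0
    have hd2' : (2 : ℝ) ≤ (d : ℝ) := by exact_mod_cast hd2
    have h4 : 4 * eSq (lvec g m') ≤ (d : ℝ) ^ 2 * eSq (lvec g m') :=
      mul_le_mul_of_nonneg_right (by nlinarith) hpos.le
    linarith
  -- Bezout
  have hbez : 1 = m₁ 0 * Int.gcdA (m₁ 0) (m₁ 1) + m₁ 1 * Int.gcdB (m₁ 0) (m₁ 1) := by
    have := Int.gcd_eq_gcd_ab (m₁ 0) (m₁ 1)
    rw [hgcd] at this
    exact_mod_cast this
  set a : ℤ := Int.gcdA (m₁ 0) (m₁ 1)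
  set b : ℤ := Int.gcdB (m₁ 0) (m₁ 1)
  set γ₁ : Matrix.SpecialLinearGroup (Fin 2) ℤ :=
    ⟨!![m₁ 0, -b; m₁ 1, a], by
      rw [Matrix.det_fin_two_of]
      linarith [hbez]⟩ with hγ₁
  set H : SL2R := g * castMat γ₁ with hH
  set v₁ : Fin 2 → ℝ := lvec g m₁ with hv₁
  have hγ₁e0 : γ₁.val.mulVec mE0 = m₁ := by
    funext i
    rcases fin2_cases i with rfl | rfl <;>
      simp [hγ₁, Matrix.mulVec, dotProduct, Fin.sum_univ_two, mE0,
        Matrix.cons_val_zero, Matrix.cons_val_one, Matrix.head_cons]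
  have hHcol0 : lvec H mE0 = v₁ := by
    rw [hH, lvec_mul_castMat, hγ₁e0, hv₁]
  set w₀ : Fin 2 → ℝ := lvec H mE1 with hw₀
  set a2 : ℝ := eSq v₁ with ha2
  have ha2ε : ε ≤ a2 := hg m₁ hm₁0
  have ha2pos : 0 < a2 := lt_of_lt_of_le hε ha2ε
  set k : ℤ := round (ip w₀ v₁ / a2) with hk
  set γ₂ : Matrix.SpecialLinearGroup (Fin 2) ℤ :=
    ⟨!![1, -k; 0, 1], by simp [Matrix.det_fin_two_of]⟩ with hγ₂
  refine ⟨γ₁ * γ₂, ?_⟩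
  set h : SL2R := g * castMat (γ₁ * γ₂) with hh
  have hhH : h = H * castMat γ₂ := by
    rw [hh, hH, mul_assoc]
    congr 1
    unfold castMat
    rw [_root_.map_mul]
  -- columns of h
  have hcol0 : lvec h mE0 = v₁ := by
    rw [hhH, lvec_mul_castMat]
    have hc : γ₂.val.mulVec mE0 = mE0 := by
      funext i
      rcases fin2_cases i with rfl | rfl <;>
        simp [hγ₂, Matrix.mulVec, dotProduct, Fin.sum_univ_two, mE0,
          Matrix.cons_val_zero, Matrix.cons_val_one, Matrix.head_cons]
    rw [hc, hHcol0]
  set w : Fin 2 → ℝ := lvec h mE1 with hwdef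
  have hcol1 : w = w₀ - (k : ℝ) • v₁ := by
    rw [hwdef, hhH, lvec_mul_castMat]
    have h1 : γ₂.val.mulVec mE1 = ![-k, 1] := by
      funext i
      rcases fin2_cases i with rfl | rfl <;>
        simp [hγ₂, Matrix.mulVec, dotProduct, Fin.sum_univ_two, mE1]
    rw [h1]
    have h2 : Mcast ![-k, 1] = Mcast mE1 - (k : ℝ) • Mcast mE0 := by
      funext i
      rcases fin2_cases i with rfl | rfl <;> simp [Mcast, mE0, mE1]
    unfold lvec
    rw [h2, Matrix.mulVec_sub, Matrix.mulVec_smul]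
    rw [← hHcol0]
    rfl
  -- entries of h in terms of the columns
  have hent0 : ∀ i, ((h : SL2R) : Mi) i 0 = v₁ i := by
    intro i
    rw [← hcol0, lvec_apply]
    simp [mE0]
  have hent1 : ∀ i, ((h : SL2R) : Mi) i 1 = w i := by
    intro i
    rw [hwdef, lvec_apply]
    simp [mE1]
  -- inner product bound
  have hipw : |ip w v₁| ≤ a2 / 2 := by
    have h1 : ip w v₁ = ip w₀ v₁ - (k : ℝ) * a2 := by
      rw [hcol1]
      simp only [ip, Pi.sub_apply, Pi.smul_apply, smul_eq_mul, ha2, eSq]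
      ring
    have h2 := abs_sub_round (ip w₀ v₁ / a2)
    have h3 : ip w₀ v₁ - (k : ℝ) * a2 = (ip w₀ v₁ / a2 - (k : ℝ)) * a2 := by
      field_simp
    rw [h1, h3, abs_mul, abs_of_pos ha2pos]
    calc |ip w₀ v₁ / a2 - (k : ℝ)| * a2 ≤ (1 / 2) * a2 := by
          apply mul_le_mul_of_nonneg_right _ (le_of_lt ha2pos)
          exact h2
    _ = a2 / 2 := by ring
  -- determinant
  have hdet : v₁ 0 * w 1 - v₁ 1 * w 0 = 1 := by
    have h1 : ((h : SL2R) : Mi).det = 1 := h.property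
    rw [Matrix.det_fin_two] at h1
    rw [hent0 0, hent0 1, hent1 0, hent1 1] at h1
    linarith
  -- Lagrange identity
  have hlag : eSq w * a2 = ip w v₁ ^ 2 + 1 := by
    have h1 : eSq w * a2 = ip w v₁ ^ 2 + (v₁ 0 * w 1 - v₁ 1 * w 0) ^ 2 := by
      simp only [eSq, ip, ha2]
      ring
    rw [h1, hdet]
    norm_num
  have hwpos : 0 < eSq w := aux_pos ha2pos hlag
  -- w is a nonzero lattice vector, so it is at least as long as v₁
  have hwlattice : w = lvec g ((γ₁ * γ₂).val.mulVec mE1) := by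
    rw [hwdef, hh, lvec_mul_castMat]
  have hn0 : (γ₁ * γ₂).val.mulVec mE1 ≠ 0 := by
    intro h0
    rw [hwlattice, h0, lvec_zero] at hwpos
    simp [eSq] at hwpos
  have hwge : a2 ≤ eSq w := by
    rw [hwlattice]
    rw [ha2, hv₁]
    exact hmin _ hn0
  -- size bounds
  have ha2le : a2 ≤ 2 := aux_a2le ha2pos hlag hipw hwge
  have hwle : eSq w ≤ 1 / 2 + 1 / ε := aux_Ele hε ha2ε ha2pos ha2le hlag hipw
  -- conclude
  intro i j
  rcases fin2_cases j with rfl | rfl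
  · rw [hent0 i]
    have h1 : v₁ i ^ 2 ≤ a2 := by
      rcases fin2_cases i with rfl | rfl <;> rw [ha2] <;> unfold eSq <;>
        nlinarith [sq_nonneg (v₁ 0), sq_nonneg (v₁ 1)]
    exact aux_abs1 hε h1 ha2le
  · rw [hent1 i]
    have h1 : w i ^ 2 ≤ eSq w := by
      rcases fin2_cases i with rfl | rfl <;> unfold eSq <;>
        nlinarith [sq_nonneg (w 0), sq_nonneg (w 1)]
    exact aux_abs2 hε h1 hwle

end Stmt8Aux

namespace Stmt8Aux

/-- Bolzano–Weierstrass for sequences in `SL₂(ℝ)` with uniformly bounded entries. -/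
lemma exists_subseq {K : ℝ} (h : ℕ → SL2R) (hb : ∀ n i j, |((h n : SL2R) : Mi) i j| ≤ K) :
    ∃ (g : SL2R) (φ : ℕ → ℕ), StrictMono φ ∧
      Filter.Tendsto (fun n => h (φ n)) Filter.atTop (nhds g) := by
  set f : ℕ → (Fin 2 → Fin 2 → ℝ) := fun n i j => ((h n : SL2R) : Mi) i j with hf
  have hC : IsCompact (Set.pi Set.univ fun _ : Fin 2 =>
      Set.pi Set.univ fun _ : Fin 2 => Set.Icc (-K) K) :=
    isCompact_univ_pi fun _ => isCompact_univ_pi fun _ => isCompact_Icc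
  have hfC : ∀ n, f n ∈ Set.pi Set.univ fun _ : Fin 2 =>
      Set.pi Set.univ fun _ : Fin 2 => Set.Icc (-K) K := by
    intro n
    rw [Set.mem_pi]
    intro i _
    rw [Set.mem_pi]
    intro j _
    exact abs_le.mp (hb n i j)
  obtain ⟨a, _, φ, hφ, hconv⟩ := hC.tendsto_subseq hfC
  set A : Mi := Matrix.of a with hA
  have hMconv : Filter.Tendsto (fun n => ((h (φ n) : SL2R) : Mi)) Filter.atTop (nhds A) := by
    apply tendsto_pi_nhds.mpr
    intro i
    apply tendsto_pi_nhds.mpr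
    intro j
    have h1 : Filter.Tendsto (fun n => (f ∘ φ) n i j) Filter.atTop (nhds (a i j)) := by
      have h2 := tendsto_pi_nhds.mp hconv i
      exact tendsto_pi_nhds.mp h2 j
    exact h1
  have hdetA : A.det = 1 := by
    have h1 : Filter.Tendsto (fun n => ((h (φ n) : SL2R) : Mi).det) Filter.atTop (nhds A.det) :=
      ((Continuous.matrix_det continuous_id).tendsto A).comp hMconv
    have h2 : (fun n => ((h (φ n) : SL2R) : Mi).det) = fun _ => (1 : ℝ) := by
      funext n
      exact (h (φ n)).property
    rw [h2] at h1
    exact (tendsto_nhds_unique tendsto_const_nhds h1).symm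
  refine ⟨⟨A, hdetA⟩, φ, hφ, ?_⟩
  apply coe_inducing.tendsto_nhds_iff.mpr
  exact hMconv

lemma tendsto_nu_lvec {ν : (Fin 2 → ℝ) → ℝ} (hν : IsNorm ν) {h : ℕ → SL2R} {g : SL2R}
    (hconv : Filter.Tendsto h Filter.atTop (nhds g)) (m : Fin 2 → ℤ) :
    Filter.Tendsto (fun n => ν (lvec (h n) m)) Filter.atTop (nhds (ν (lvec g m))) :=
  ((cont_nu_lvec hν m).tendsto g).comp hconv

/-! ### The diagonal orbit of `Λ_α` -/

lemma gu_coe (t α : ℝ) : ((gDiag t * uMat α : SL2R) : Mi) =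
    !![Real.exp t, Real.exp t * α; 0, Real.exp (-t)] := by
  rw [Matrix.SpecialLinearGroup.coe_mul]
  show (!![Real.exp t, 0; 0, Real.exp (-t)] : Mi) * !![1, α; 0, 1] = _
  rw [Matrix.mul_fin_two]
  congr 1 <;> ring

lemma orbit_vec (t α : ℝ) (m : Fin 2 → ℤ) :
    lvec (gDiag t * uMat α) m =
      ![Real.exp t * ((m 0 : ℝ) + α * (m 1 : ℝ)), Real.exp (-t) * (m 1 : ℝ)] := by
  funext i
  rw [lvec_apply, gu_coe]
  rcases fin2_cases i with rfl | rfl <;> simp <;> ring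

lemma pair_ne_zero {p q : ℤ} (h : ¬(p = 0 ∧ q = 0)) : (![p, q] : Fin 2 → ℤ) ≠ 0 := by
  intro h0
  apply h
  constructor
  · have := congrFun h0 0
    simpa using this
  · have := congrFun h0 1
    simpa using this

lemma ne_zero_pair {m : Fin 2 → ℤ} (h : m ≠ 0) : ¬(m 0 = 0 ∧ m 1 = 0) := by
  intro ⟨h0, h1⟩
  apply h
  funext i
  rcases fin2_cases i with rfl | rfl
  · exact h0
  · exact h1

lemma m_eq_pair (m : Fin 2 → ℤ) : m = ![m 0, m 1] := by
  funext i
  rcases fin2_cases i with rfl | rfl <;> simp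

/-! ### The critical locus -/

lemma mem_criticalLocus_of {ν : (Fin 2 → ℝ) → ℝ} (g : SL2R)
    (h : ∀ m : Fin 2 → ℤ, m ≠ 0 → criticalRadius ν ≤ ν (lvec g m)) :
    (QuotientGroup.mk g : XSpace) ∈ criticalLocus ν := by
  refine ⟨g, rfl, ?_⟩
  rintro v ⟨m, rfl⟩ hv
  by_cases hm : m = 0
  · rw [hm]
    have h1 : (fun i => (((0 : Fin 2 → ℤ)) i : ℝ)) = (0 : Fin 2 → ℝ) := by
      funext i
      simp
    show (g : Mi).mulVec (fun i => (((0 : Fin 2 → ℤ)) i : ℝ)) = 0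
    rw [h1, Matrix.mulVec_zero]
  · exact absurd hv (not_lt.mpr (h m hm))

lemma criticalLocus_spec {ν : (Fin 2 → ℝ) → ℝ} {x : XSpace} (hx : x ∈ criticalLocus ν) :
    ∃ g : SL2R, QuotientGroup.mk g = x ∧
      ∀ m : Fin 2 → ℤ, m ≠ 0 → criticalRadius ν ≤ ν (lvec g m) := by
  obtain ⟨g, hgx, hg⟩ := hx
  refine ⟨g, hgx, fun m hm => ?_⟩
  by_contra hlt
  push_neg at hlt
  exact lvec_ne_zero g hm (hg (lvec g m) ⟨m, rfl⟩ hlt)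

end Stmt8Aux

set_option maxHeartbeats 1000000 in
open Stmt8Aux Filter in
/-- `α` is `ν`-Dirichlet improvable if and only if there are `t₀ > 0` and an open set
`U ⊇ L_ν` such that `g_t Λ_α ∉ U` for all `t > t₀`. -/
theorem stmt8 (ν : (Fin 2 → ℝ) → ℝ) (hν : IsNorm ν) (α : ℝ) :
    DirichletImprovable ν α ↔
      ∃ t₀ : ℝ, 0 < t₀ ∧ ∃ U : Set XSpace, IsOpen U ∧ criticalLocus ν ⊆ U ∧
        ∀ t : ℝ, t₀ < t → gDiag t • LatX α ∉ U := by
  constructor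
  · -- Dirichlet-improvable ⇒ the orbit avoids a neighbourhood of the critical locus
    intro hDI0
    unfold DirichletImprovable at hDI0
    obtain ⟨c, hc0, hc1, T₀, hT₀, hDI⟩ := hDI0
    have hrpos : 0 < criticalRadius ν := by
      obtain ⟨p, q, hpq, hlt⟩ := hDI T₀ le_rfl
      exact lt_of_le_of_lt (nu_nonneg hν _) hlt
    set s := Real.sqrt c with hs
    have hs0 : 0 < s := Real.sqrt_pos.mpr hc0
    have hs1 : s < 1 := by
      rw [hs, show (1:ℝ) = Real.sqrt 1 from Real.sqrt_one.symm]
      exact Real.sqrt_lt_sqrt hc0.le hc1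
    have hs2 : s ^ 2 = c := Real.sq_sqrt hc0.le
    set δ := s * criticalRadius ν with hδ
    have hδ0 : 0 < δ := mul_pos hs0 hrpos
    have hδr : δ < criticalRadius ν := by nlinarith
    set S := {g : SL2R | ∀ m : Fin 2 → ℤ, m ≠ 0 → δ < ν (lvec g m)} with hSdef
    refine ⟨max 1 (Real.log (T₀ / s)), lt_of_lt_of_le one_pos (le_max_left _ _),
      QuotientGroup.mk '' S, ?_, ?_, ?_⟩
    · -- openness
      apply isOpen_mk_image (isOpen_S hν δ)
      intro g γ hg hγ
      obtain ⟨γ', hγ'⟩ := hγ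
      intro m hm
      have hcg : γ = castMat γ' := hγ'.symm
      rw [hcg, lvec_mul_castMat]
      exact hg _ (int_mulVec_ne_zero γ' hm)
    · -- contains the critical locus
      intro x hx
      obtain ⟨g, hgx, hg⟩ := criticalLocus_spec hx
      exact ⟨g, fun m hm => lt_of_lt_of_le hδr (hg m hm), hgx⟩
    · -- the orbit avoids it
      intro t ht hmem
      obtain ⟨g1, hg1S, hg1x⟩ := hmem
      set T := s * Real.exp t with hT
      have hTge : T₀ ≤ T := by
        have h1 : Real.log (T₀ / s) < t := lt_of_le_of_lt (le_max_right _ _) ht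
        have h2 : T₀ / s < Real.exp t := by
          calc T₀ / s = Real.exp (Real.log (T₀ / s)) :=
                (Real.exp_log (by positivity)).symm
          _ < Real.exp t := Real.exp_lt_exp.mpr h1
        have h3 : s * (T₀ / s) ≤ s * Real.exp t := mul_le_mul_of_nonneg_left h2.le hs0.le
        have h4 : s * (T₀ / s) = T₀ := by field_simp
        rw [hT, ← h4]
        exact h3
      obtain ⟨p, q, hpq, hlt⟩ := hDI T hTge
      have hm0 : (![p, q] : Fin 2 → ℤ) ≠ 0 := pair_ne_zero hpq
      have hveq : lvec (gDiag t * uMat α) ![p, q] =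
          s • ![c⁻¹ * T * ((p : ℝ) + α * (q : ℝ)), T⁻¹ * (q : ℝ)] := by
        rw [orbit_vec]
        funext i
        rcases fin2_cases i with rfl | rfl
        · show Real.exp t * (((![p, q] : Fin 2 → ℤ) 0 : ℝ) + α * ((![p, q] : Fin 2 → ℤ) 1 : ℝ))
            = s * (c⁻¹ * T * ((p : ℝ) + α * (q : ℝ)))
          rw [hT, ← hs2]
          have : ((![p, q] : Fin 2 → ℤ) 0 : ℝ) = (p : ℝ) := by simp
          rw [this]
          have : ((![p, q] : Fin 2 → ℤ) 1 : ℝ) = (q : ℝ) := by simp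
          rw [this]
          field_simp
        · show Real.exp (-t) * ((![p, q] : Fin 2 → ℤ) 1 : ℝ) = s * (T⁻¹ * (q : ℝ))
          rw [hT, Real.exp_neg]
          have : ((![p, q] : Fin 2 → ℤ) 1 : ℝ) = (q : ℝ) := by simp
          rw [this]
          rw [mul_inv]
          field_simp
      have hcontr : ν (lvec (gDiag t * uMat α) ![p, q]) < δ := by
        rw [hveq, hν.2.1, abs_of_pos hs0, hδ]
        exact mul_lt_mul_of_pos_left hlt hs0
      have hx2 : (QuotientGroup.mk g1 : XSpace) = QuotientGroup.mk (gDiag t * uMat α) := by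
        rw [hg1x, smul_LatX]
      obtain ⟨γ', hγ'⟩ := mk_eq_iff.mp hx2
      have hfact : gDiag t * uMat α = g1 * castMat γ' := by
        rw [castMat, hγ', mul_inv_cancel_left]
      rw [hfact, lvec_mul_castMat] at hcontr
      exact absurd (hg1S _ (int_mulVec_ne_zero γ' hm0)) (not_lt.mpr hcontr.le)
  · -- orbit avoids a neighbourhood ⇒ Dirichlet-improvable
    rintro ⟨t₀, ht₀, U, hUopen, hLU, havoid⟩
    by_cases hrpos : 0 < criticalRadius ν
    swap
    · exfalso
      push_neg at hrpos
      have hall : gDiag (t₀ + 1) • LatX α ∈ criticalLocus ν := by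
        rw [smul_LatX]
        apply mem_criticalLocus_of
        intro m hm
        exact le_trans hrpos (nu_nonneg hν _)
      exact havoid (t₀ + 1) (by linarith) (hLU hall)
    have hclaim : ∃ δ : ℝ, 0 < δ ∧ δ < criticalRadius ν ∧ ∃ t₁ : ℝ,
        ∀ t : ℝ, t₁ ≤ t → ∃ m : Fin 2 → ℤ, m ≠ 0 ∧
          ν (lvec (gDiag t * uMat α) m) < δ := by
      by_contra hcon
      push_neg at hcon
      obtain ⟨C, hC, hCu⟩ := nu_upper hν
      have hseq : ∀ n : ℕ, ∃ t : ℝ, t₀ + 1 ≤ t ∧ ∀ m : Fin 2 → ℤ, m ≠ 0 →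
          criticalRadius ν * (1 - 1 / ((n : ℝ) + 2)) ≤ ν (lvec (gDiag t * uMat α) m) := by
        intro n
        have hn2 : (0 : ℝ) < (n : ℝ) + 2 := by positivity
        have hinv : 0 < 1 / ((n : ℝ) + 2) := by positivity
        have hinvle : 1 / ((n : ℝ) + 2) ≤ 1 / 2 := by
          apply one_div_le_one_div_of_le
          · norm_num
          · have : (0:ℝ) ≤ (n : ℝ) := Nat.cast_nonneg n
            linarith
        have hδn0 : 0 < criticalRadius ν * (1 - 1 / ((n : ℝ) + 2)) := by nlinarith
        have hδnr : criticalRadius ν * (1 - 1 / ((n : ℝ) + 2)) < criticalRadius ν := by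
          nlinarith
        exact hcon _ hδn0 hδnr (t₀ + 1)
      choose tn htn htnb using hseq
      set ε := (criticalRadius ν / (2 * C)) ^ 2 with hε
      have hεpos : 0 < ε := by positivity
      have hlb : ∀ n, ∀ m : Fin 2 → ℤ, m ≠ 0 →
          ε ≤ eSq (lvec (gDiag (tn n) * uMat α) m) := by
        intro n m hm
        set v := lvec (gDiag (tn n) * uMat α) m with hv
        have h1 := htnb n m hm
        have hn2 : (0 : ℝ) < (n : ℝ) + 2 := by positivity
        have hinvle : 1 / ((n : ℝ) + 2) ≤ 1 / 2 := by
          apply one_div_le_one_div_of_le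
          · norm_num
          · have : (0:ℝ) ≤ (n : ℝ) := Nat.cast_nonneg n
            linarith
        have h2 : criticalRadius ν / 2 ≤ ν v := by nlinarith
        have h5 : ν v ≤ C * ‖v‖ := hCu _
        have h6 : criticalRadius ν / (2 * C) ≤ ‖v‖ := by
          rw [div_le_iff₀ (by positivity)]
          nlinarith [norm_nonneg v]
        have h7 : ‖v‖ ^ 2 ≤ eSq v := sq_pinorm_le_eSq v
        calc ε = (criticalRadius ν / (2 * C)) ^ 2 := hε
        _ ≤ ‖v‖ ^ 2 := by
            apply pow_le_pow_left₀ (by positivity) h6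
        _ ≤ eSq v := h7
      have hred : ∀ n, ∃ γ : Matrix.SpecialLinearGroup (Fin 2) ℤ, ∀ i j,
          |((gDiag (tn n) * uMat α * castMat γ : SL2R) : Mi) i j| ≤ 2 + 1 / ε :=
        fun n => reduction hεpos _ (hlb n)
      choose γn hγn using hred
      set hn : ℕ → SL2R := fun n => gDiag (tn n) * uMat α * castMat (γn n) with hhn
      obtain ⟨ginf, φ, hφ, hconv⟩ := exists_subseq hn (fun n i j => hγn n i j)
      have hφn : ∀ n : ℕ, (n : ℝ) ≤ (φ n : ℝ) := fun n => by
        exact_mod_cast Nat.cast_le.mpr (hφ.le_apply)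
      have hb0 : Tendsto (fun n : ℕ => 1 / ((φ n : ℝ) + 2)) atTop (𝓝 0) := by
        have ha : Tendsto (fun x : ℝ => (x + 2)⁻¹) atTop (𝓝 0) :=
          (tendsto_atTop_add_const_right atTop 2 tendsto_id).inv_tendsto_atTop
        have hφ' : Tendsto (fun n : ℕ => (φ n : ℝ)) atTop atTop :=
          tendsto_natCast_atTop_atTop.comp hφ.tendsto_atTop
        have := ha.comp hφ'
        simpa [one_div, Function.comp_def] using this
      have h2 : Tendsto (fun n : ℕ => criticalRadius ν * (1 - 1 / ((φ n : ℝ) + 2)))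
          atTop (𝓝 (criticalRadius ν)) := by
        have hone : Tendsto (fun n : ℕ => (1 : ℝ) - 1 / ((φ n : ℝ) + 2)) atTop (𝓝 (1 - 0)) :=
          Tendsto.sub tendsto_const_nhds hb0
        have hmul := hone.const_mul (criticalRadius ν)
        simpa using hmul
      have hginf : ∀ m : Fin 2 → ℤ, m ≠ 0 → criticalRadius ν ≤ ν (lvec ginf m) := by
        intro m hm
        have h1 : Tendsto (fun n => ν (lvec (hn (φ n)) m)) atTop (𝓝 (ν (lvec ginf m))) :=
          tendsto_nu_lvec hν hconv m
        apply le_of_tendsto_of_tendsto' h2 h1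
        intro n
        have h3 : lvec (hn (φ n)) m =
            lvec (gDiag (tn (φ n)) * uMat α) ((γn (φ n)).val.mulVec m) :=
          lvec_mul_castMat _ _ _
        rw [h3]
        exact htnb (φ n) _ (int_mulVec_ne_zero _ hm)
      have hmem : (QuotientGroup.mk ginf : XSpace) ∈ U := hLU (mem_criticalLocus_of ginf hginf)
      have hUopen' : IsOpen ((QuotientGroup.mk : SL2R → XSpace) ⁻¹' U) :=
        hUopen.preimage mk_continuous
      have hev : ∀ᶠ n in atTop, hn (φ n) ∈ ((QuotientGroup.mk : SL2R → XSpace) ⁻¹' U) :=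
        hconv.eventually_mem (hUopen'.mem_nhds hmem)
      obtain ⟨n, hnU⟩ := hev.exists
      apply havoid (tn (φ n)) (by linarith [htn (φ n)])
      have hmk : QuotientGroup.mk (hn (φ n)) = gDiag (tn (φ n)) • LatX α := by
        rw [smul_LatX, hhn]
        exact QuotientGroup.mk_mul_of_mem _ (castMat_mem_Gamma _)
      rw [← hmk]
      exact hnU
    obtain ⟨δ, hδ0, hδr, t₁, hδt⟩ := hclaim
    unfold DirichletImprovable
    have hdr : 0 < δ / criticalRadius ν := div_pos hδ0 hrpos
    have hdr1 : δ / criticalRadius ν < 1 := (div_lt_one hrpos).mpr hδr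
    refine ⟨(δ / criticalRadius ν) ^ 2, by positivity,
      by nlinarith [mul_le_mul_of_nonneg_left hdr1.le hdr.le],
      max 2 (Real.exp t₁ * (δ / criticalRadius ν)), lt_of_lt_of_le one_lt_two (le_max_left _ _),
      ?_⟩
    intro T hT
    have hTpos : 0 < T := lt_of_lt_of_le two_pos (le_trans (le_max_left _ _) hT)
    set t := Real.log (T * criticalRadius ν / δ) with htdef
    have harg : 0 < T * criticalRadius ν / δ := by positivity
    have hexp : Real.exp t = T * criticalRadius ν / δ := Real.exp_log harg
    have ht₁ : t₁ ≤ t := by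
      have h2 : Real.exp t₁ * (δ / criticalRadius ν) ≤ T := le_trans (le_max_right _ _) hT
      have h3 : Real.exp t₁ ≤ T * criticalRadius ν / δ := by
        rw [le_div_iff₀ hδ0]
        have h4 : δ / criticalRadius ν * criticalRadius ν = δ :=
          div_mul_cancel₀ _ (ne_of_gt hrpos)
        nlinarith [mul_le_mul_of_nonneg_right h2 hrpos.le]
      calc t₁ = Real.log (Real.exp t₁) := (Real.log_exp t₁).symm
      _ ≤ Real.log (T * criticalRadius ν / δ) := Real.log_le_log (Real.exp_pos _) h3
    obtain ⟨m, hm0, hlt⟩ := hδt t ht₁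
    refine ⟨m 0, m 1, ne_zero_pair hm0, ?_⟩
    have hvec : (![((δ / criticalRadius ν) ^ 2)⁻¹ * T * ((m 0 : ℝ) + α * (m 1 : ℝ)),
        T⁻¹ * (m 1 : ℝ)] : Fin 2 → ℝ) = (criticalRadius ν / δ) • lvec (gDiag t * uMat α) m := by
      rw [orbit_vec]
      funext i
      rcases fin2_cases i with rfl | rfl
      · show ((δ / criticalRadius ν) ^ 2)⁻¹ * T * ((m 0 : ℝ) + α * (m 1 : ℝ)) =
          (criticalRadius ν / δ) * (Real.exp t * ((m 0 : ℝ) + α * (m 1 : ℝ)))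
        rw [hexp]
        field_simp
      · show T⁻¹ * (m 1 : ℝ) =
          (criticalRadius ν / δ) * (Real.exp (-t) * (m 1 : ℝ))
        rw [Real.exp_neg, hexp]
        field_simp
    rw [hvec, hν.2.1, abs_of_pos (div_pos hrpos hδ0)]
    calc criticalRadius ν / δ * ν (lvec (gDiag t * uMat α) m)
        < criticalRadius ν / δ * δ := mul_lt_mul_of_pos_left hlt (div_pos hrpos hδ0)
    _ = criticalRadius ν := by field_simp
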